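/- Let l > 1 be an integer and λ₁, λ₂ nonzero reals. Suppose f: ℝ → (0,∞) satisfies both: (i) f'' = λ₂f' + (λ₁² − λ₁λ₂ − α/l)f, and (ii) α_F/(1−l) + (f')² + [α/l + λ₁λ₂ + (λ₂²−λ₁²)/(1−l)]f² + [(l/(1−l))λ₁ + ((l−2)/(1−l))λ₂] f f' = 0, for constants α, α_F. Then one of the following holds: (1) α = (λ₁²−λ₁λ₂)l, α_F = c²(lλ₁²−λ₂²), f = c constant; (2) λ₁ = λ₂, α = 0, α_F = (l−1)c₂²λ₁², f(t) = c₁e^{λ₁t}+c₂; (3) λ₂ ≠ lλ₁, α = [(3l²+l)λ₁²λ₂² − (l²+l)λ₁λ₂³ − 2l²λ₁³λ₂]/(lλ₁−λ₂)², α_F = 0, f(t) = c₀e^{(lλ₁²−λ₂²)t/(lλ₁−λ₂)}; (4) λ₂² − 2lλ₁² + lλ₁λ₂ = 0, α = l(λ₁−λ₂/2)², α_F = 0, f(t) = c₁e^{(λ₂/2)t}; and conversely each of (1)-(4) gives a solution. -/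

import Mathlib

open Real

private lemma const_of_sq_const {v : ℝ → ℝ} (hv : Continuous v) {Δ : ℝ}
    (h : ∀ t, v t ^ 2 = Δ) : ∀ t, v t = v 0 := by
  rcases eq_or_ne (v 0) 0 with h0 | h0
  · intro t
    have hΔ : Δ = 0 := by rw [← h 0, h0]; ring
    have ht := h t; rw [hΔ] at ht
    rw [h0]; exact pow_eq_zero_iff (two_ne_zero) |>.mp ht
  · have hS : IsClosed {t | v t = v 0} := isClosed_eq hv continuous_const
    have hS2 : IsClosed {t | v t = -v 0} := isClosed_eq hv continuous_const
    have hcover : ∀ t, v t = v 0 ∨ v t = -v 0 := by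
      intro t
      have hm : (v t - v 0) * (v t + v 0) = 0 := by nlinarith [h t, h 0]
      rcases mul_eq_zero.mp hm with h' | h'
      · left; linarith
      · right; linarith
    have hcompl : {t | v t = v 0}ᶜ = {t | v t = -v 0} := by
      ext t; simp only [Set.mem_compl_iff, Set.mem_setOf_eq]
      constructor
      · intro ht; rcases hcover t with h' | h'
        · exact absurd h' ht
        · exact h'
      · intro ht h'; exact h0 (by linarith [ht, h'])
    have hopen : IsOpen {t | v t = v 0} := by
      rw [← isClosed_compl_iff, hcompl]; exact hS2
    rcases isClopen_iff.mp ⟨hS, hopen⟩ with he | hu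
    · exact absurd (Set.eq_empty_iff_forall_notMem.mp he 0) (by simp)
    · intro t
      have : t ∈ {t | v t = v 0} := hu.symm ▸ Set.mem_univ t
      exact this

private lemma eq_exp_of_deriv_eq {f : ℝ → ℝ} (hf : Differentiable ℝ f) {k : ℝ}
    (h : ∀ t, deriv f t = k * f t) : ∀ t, f t = f 0 * Real.exp (k * t) := by
  have key : ∀ t, f t * Real.exp (-(k * t)) = f 0 * Real.exp (-(k*0)) := by
    have hg : ∀ x : ℝ, HasDerivAt (fun t => f t * Real.exp (-(k * t))) 0 x := by
      intro x
      have h1 : HasDerivAt (fun t : ℝ => -(k * t)) (-k) x := by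
        simpa using (hasDerivAt_neg x).const_mul k
      have h2 := h1.exp
      have h3 := (hf x).hasDerivAt.mul h2
      refine h3.congr_deriv ?_
      rw [h x]; ring
    intro t
    exact is_const_of_deriv_eq_zero (fun x => (hg x).differentiableAt)
      (fun x => (hg x).deriv) t 0
  intro t
  have := key t
  calc f t = f t * Real.exp (-(k*t)) * Real.exp (k*t) := by
        rw [mul_assoc, ← Real.exp_add]; simp
    _ = f 0 * Real.exp (k*t) := by rw [this]; simp

private lemma GRW_deriv_cexp (c k : ℝ) :
    deriv (fun t => c * Real.exp (k * t)) = fun t => c * k * Real.exp (k * t) := by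
  funext t
  have h1 : HasDerivAt (fun t : ℝ => k * t) k t := by
    simpa using (hasDerivAt_id t).const_mul k
  have h2 := h1.exp.const_mul c
  have h3 : c * (Real.exp (k*t) * k) = c * k * Real.exp (k*t) := by ring
  rw [h3] at h2
  exact h2.deriv

private lemma GRW_deriv_cexp_add (c k d : ℝ) :
    deriv (fun t => c * Real.exp (k * t) + d) = fun t => c * k * Real.exp (k * t) := by
  funext t
  have h1 : HasDerivAt (fun t : ℝ => k * t) k t := by
    simpa using (hasDerivAt_id t).const_mul k
  have h2 := (h1.exp.const_mul c).add_const d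
  have h3 : c * (Real.exp (k*t) * k) = c * k * Real.exp (k*t) := by ring
  rw [h3] at h2
  exact h2.deriv

set_option maxHeartbeats 1000000 in
theorem GRW_quarter_symmetric_Einstein_classification
    (l : ℕ) (hl : 1 < l) (l1 l2 : ℝ) (hl1 : l1 ≠ 0) (hl2 : l2 ≠ 0)
    (f : ℝ → ℝ) (hfpos : ∀ t, 0 < f t) (hf : ContDiff ℝ 2 f)
    (α αF : ℝ) :
    ((∀ t, deriv (deriv f) t =
        l2 * deriv f t + (l1 ^ 2 - l1 * l2 - α / (l : ℝ)) * f t) ∧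
     (∀ t, αF / (1 - (l : ℝ)) + (deriv f t) ^ 2
        + (α / (l : ℝ) + l1 * l2 + (l2 ^ 2 - l1 ^ 2) / (1 - (l : ℝ))) * (f t) ^ 2
        + (((l : ℝ) / (1 - (l : ℝ))) * l1 + (((l : ℝ) - 2) / (1 - (l : ℝ))) * l2)
            * f t * deriv f t = 0))
    ↔
    -- (1)
    ((∃ c : ℝ, α = (l1 ^ 2 - l1 * l2) * (l : ℝ) ∧
        αF = c ^ 2 * ((l : ℝ) * l1 ^ 2 - l2 ^ 2) ∧ (∀ t, f t = c)) ∨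
    -- (2)
     (l1 = l2 ∧ α = 0 ∧
        ∃ c₁ c₂ : ℝ, αF = ((l : ℝ) - 1) * c₂ ^ 2 * l1 ^ 2 ∧
          (∀ t, f t = c₁ * exp (l1 * t) + c₂)) ∨
    -- (3)
     (l2 ≠ (l : ℝ) * l1 ∧
        α = ((3 * (l : ℝ) ^ 2 + (l : ℝ)) * l1 ^ 2 * l2 ^ 2
              - ((l : ℝ) ^ 2 + (l : ℝ)) * l1 * l2 ^ 3
              - 2 * (l : ℝ) ^ 2 * l1 ^ 3 * l2) / ((l : ℝ) * l1 - l2) ^ 2 ∧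
        αF = 0 ∧
        ∃ c₀ : ℝ, ∀ t, f t =
          c₀ * exp ((((l : ℝ) * l1 ^ 2 - l2 ^ 2) / ((l : ℝ) * l1 - l2)) * t)) ∨
    -- (4)
     (l2 ^ 2 - 2 * (l : ℝ) * l1 ^ 2 + (l : ℝ) * l1 * l2 = 0 ∧
        α = (l : ℝ) * (l1 - l2 / 2) ^ 2 ∧ αF = 0 ∧
        ∃ c₁ : ℝ, ∀ t, f t = c₁ * exp ((l2 / 2) * t))) := by
  have hL : (1:ℝ) < (l:ℝ) := by exact_mod_cast hl
  have hL0 : (l:ℝ) ≠ 0 := by positivity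
  have hL1 : (1:ℝ) - (l:ℝ) ≠ 0 := by intro h; linarith
  have h2' : ContDiff ℝ ((1:ℕ∞)+1) f := by convert hf using 2; norm_num
  have hd := contDiff_succ_iff_deriv.mp h2'
  have hdf : Differentiable ℝ f := hd.1
  have hdf' : Differentiable ℝ (deriv f) := hd.2.2.differentiable (by norm_num)
  have hcf' : Continuous (deriv f) := hd.2.2.continuous
  have hfne : ∀ t, f t ≠ 0 := fun t => (hfpos t).ne'
  constructor
  · rintro ⟨h1, h2⟩
    obtain ⟨A, hA⟩ : ∃ A, A = l1 ^ 2 - l1 * l2 - α / (l : ℝ) := ⟨_, rfl⟩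
    obtain ⟨C, hC⟩ : ∃ C, C = α / (l : ℝ) + l1 * l2 + (l2 ^ 2 - l1 ^ 2) / (1 - (l : ℝ)) := ⟨_, rfl⟩
    obtain ⟨D, hD⟩ : ∃ D, D = ((l : ℝ) / (1 - (l : ℝ))) * l1 + (((l : ℝ) - 2) / (1 - (l : ℝ))) * l2 := ⟨_, rfl⟩
    rw [← hA] at h1
    simp only [← hC, ← hD] at h2
    -- derivative of equation (ii)
    have hquad : ∀ t, (2*l2 + D)*(deriv f t)^2 + (2*A+2*C+D*l2)*(f t * deriv f t)
        + (D*A)*(f t)^2 = 0 := by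
      intro t
      have Hf : HasDerivAt f (deriv f t) t := (hdf t).hasDerivAt
      have Hf' : HasDerivAt (deriv f) (deriv (deriv f) t) t := (hdf' t).hasDerivAt
      have Hg : HasDerivAt (fun s => αF / (1 - (l : ℝ)) + (deriv f s) ^ 2 + C * (f s) ^ 2
          + D * f s * deriv f s)
          (0 + 2 * deriv f t ^ (2-1) * deriv (deriv f) t + C * (2 * f t ^ (2-1) * deriv f t)
            + (D * deriv f t * deriv f t + D * f t * deriv (deriv f) t)) t := by
        exact (((hasDerivAt_const t (αF / (1 - (l:ℝ)))).add (Hf'.pow 2)).add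
          ((Hf.pow 2).const_mul C)).add ((Hf.const_mul D).mul Hf')
      have H0 : HasDerivAt (fun s => αF / (1 - (l : ℝ)) + (deriv f s) ^ 2 + C * (f s) ^ 2
          + D * f s * deriv f s) 0 t := by
        have he : (fun s => αF / (1 - (l : ℝ)) + (deriv f s) ^ 2 + C * (f s) ^ 2
            + D * f s * deriv f s) = fun _ => (0:ℝ) := funext h2
        rw [he]; exact hasDerivAt_const t 0
      have hzero := Hg.unique H0
      norm_num at hzero
      linear_combination hzero - (2*deriv f t + D * f t) * (h1 t)
    have hcontu : Continuous (fun t => deriv f t / f t) :=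
      hcf'.div hf.continuous hfne
    have hquadu : ∀ t, (2*l2 + D) * (deriv f t / f t)^2 + (2*A+2*C+D*l2) * (deriv f t / f t)
        + D*A = 0 := by
      intro t
      have h := hquad t
      have hft := hfne t
      field_simp
      linear_combination h
    by_cases hdeg : l1 = l2 ∧ α = 0
    · obtain ⟨h12, hα0⟩ := hdeg
      have hA0 : A = 0 := by rw [hA, h12, hα0]; ring
      have h1' : ∀ t, deriv (deriv f) t = l2 * deriv f t := by
        intro t; have := h1 t; rw [hA0] at this; simpa using this
      have hexp' : ∀ t, deriv f t = deriv f 0 * Real.exp (l2 * t) :=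
        eq_exp_of_deriv_eq hdf' h1'
      refine Or.inr (Or.inl ⟨h12, hα0, deriv f 0 / l1, f 0 - deriv f 0 / l1, ?_, ?_⟩)
      · have e := h2 0
        rw [hC, hD, hα0, ← h12] at e
        field_simp at e ⊢
        linear_combination (mul_left_cancel₀ hL0 (by linear_combination e : (l:ℝ) * (αF - ((l:ℝ)-1)*(deriv f 0 - l1*f 0)^2) = (l:ℝ) * 0))
      · have hg : ∀ x : ℝ, HasDerivAt (fun t => f t - (deriv f 0 / l1) * Real.exp (l1*t)) 0 x := by
          intro x
          have h1x : HasDerivAt (fun t:ℝ => l1*t) l1 x := by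
            simpa using (hasDerivAt_id x).const_mul l1
          have hx := (hdf x).hasDerivAt.sub ((h1x.exp).const_mul (deriv f 0 / l1))
          refine hx.congr_deriv ?_
          rw [hexp' x, ← h12]
          field_simp
          ring
        have hconst : ∀ t : ℝ, f t - (deriv f 0 / l1) * Real.exp (l1*t)
            = f 0 - (deriv f 0 / l1) * Real.exp (l1*0) :=
          fun t => is_const_of_deriv_eq_zero (fun x => (hg x).differentiableAt)
            (fun x => (hg x).deriv) t 0
        intro t
        have h3 := hconst t
        rw [mul_zero, Real.exp_zero, mul_one] at h3
        linarith
    · -- u is constant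
      have hkey : ∀ t, deriv f t / f t = deriv f 0 / f 0 := by
        by_cases haz : 2*l2 + D = 0
        · -- linear case
          have h12' : l1 = l2 := by
            have h := haz
            rw [hD] at h
            field_simp at h
            have h2 : (l:ℝ) * (l1 - l2) = 0 := by linear_combination h
            rcases mul_eq_zero.mp h2 with h' | h'
            · exact absurd h' hL0
            · linarith
          by_cases hbz : 2*A+2*C+D*l2 = 0
          · exfalso
            have hcz : D*A = 0 := by
              have := hquadu 0
              rw [haz, hbz] at this
              linear_combination this
            have hDval : D = -2*l1 := by
              rw [hD, h12']; field_simp; ring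
            have hAz : A = 0 := by
              rcases mul_eq_zero.mp hcz with h' | h'
              · rw [hDval] at h'
                exact absurd h' (by simp [hl1, h12']; intro hh; exact hl1 (h12'.symm ▸ hh))
              · exact h'
            have hα0 : α = 0 := by
              have := hAz
              rw [hA, h12'] at this
              field_simp at this
              linarith [this]
            exact hdeg ⟨h12', hα0⟩
          · intro t
            refine mul_left_cancel₀ hbz ?_
            have p := hquadu t
            have q := hquadu 0
            rw [haz] at p q
            linear_combination p - q
        · intro t
          have hv2 : ∀ s, (2*(2*l2+D)*(deriv f s / f s) + (2*A+2*C+D*l2))^2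
              = (2*A+2*C+D*l2)^2 - 4*(2*l2+D)*(D*A) := by
            intro s
            linear_combination 4*(2*l2+D)*(hquadu s)
          have hvc : Continuous (fun s => 2*(2*l2+D)*(deriv f s / f s) + (2*A+2*C+D*l2)) :=
            (continuous_const.mul hcontu).add continuous_const
          have := const_of_sq_const hvc hv2 t
          have h2a : (2*(2*l2+D)) ≠ 0 := mul_ne_zero two_ne_zero haz
          exact mul_left_cancel₀ h2a (by linarith [this])
      obtain ⟨k, hk⟩ : ∃ k, ∀ t, deriv f t = k * f t :=
        ⟨deriv f 0 / f 0, fun t => (div_eq_iff (hfne t)).mp (hkey t)⟩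
      have hfexp : ∀ t, f t = f 0 * Real.exp (k * t) := eq_exp_of_deriv_eq hdf hk
      have hdd : ∀ t, deriv (deriv f) t = k * deriv f t := by
        intro t
        have hdfk : deriv f = fun s => k * f s := funext hk
        conv_lhs => rw [hdfk]
        rw [deriv_const_mul _ (hdf t)]
      have e1 : k^2 = l2*k + A := by
        have h10 := h1 0
        rw [hdd 0, hk 0] at h10
        exact mul_right_cancel₀ (hfne 0) (by linear_combination h10)
      by_cases hk0 : k = 0
      · -- case (1)
        have hAz : A = 0 := by
          have := e1; rw [hk0] at this; linarith
        have hα : α = (l1 ^ 2 - l1 * l2) * (l:ℝ) := by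
          have h7 := hAz; rw [hA] at h7
          field_simp at h7
          linarith
        refine Or.inl ⟨f 0, hα, ?_, fun t => by rw [hfexp t, hk0]; simp⟩
        have e := h2 0
        rw [hk 0, hk0, hC, hD, hα] at e
        field_simp at e ⊢
        linear_combination e
      · -- case (3)
        have hE2 : k^2 + C + D*k = 0 := by
          have ha0 := h2 0
          have ha1 := h2 1
          rw [hk 0] at ha0
          rw [hk 1, hfexp 1] at ha1
          have hsub : (k^2 + C + D*k) * ((f 0)^2 * (1 - Real.exp (k*1)^2)) = 0 := by
            linear_combination ha0 - ha1
          have hne1 : (1 : ℝ) - Real.exp (k*1)^2 ≠ 0 := by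
            intro h
            have hh : Real.exp (k*1 + k*1) = 1 := by rw [Real.exp_add]; nlinarith
            have hlog := congrArg Real.log hh
            rw [Real.log_exp, Real.log_one] at hlog
            exact hk0 (by linarith)
          rcases mul_eq_zero.mp hsub with h' | h'
          · exact h'
          · exact absurd h' (mul_ne_zero (pow_ne_zero 2 (hfne 0)) hne1)
        have hαF : αF = 0 := by
          have h8 := h2 0
          rw [hk 0] at h8
          have hB : αF / (1 - (l:ℝ)) = 0 := by linear_combination h8 - (f 0)^2 * hE2
          field_simp at hB
          simpa using hB
        have e4 : ((l:ℝ)*l1 - l2)*k = (l:ℝ)*l1^2 - l2^2 := by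
          have h5 : (D + l2)*k + (C + A) = 0 := by linear_combination hE2 - e1
          rw [hC, hD, hA] at h5
          field_simp at h5
          have hnz : ((l:ℝ)^2*(1-(l:ℝ))) ≠ 0 := mul_ne_zero (pow_ne_zero 2 hL0) hL1
          refine mul_right_cancel₀ hnz ?_
          linear_combination ((l:ℝ)*(1-(l:ℝ))) * h5
        have hne : l2 ≠ (l:ℝ)*l1 := by
          intro h
          rw [h] at e4
          have h9 : (l:ℝ)*l1^2*(1-(l:ℝ)) = 0 := by linear_combination -e4
          exact absurd h9 (mul_ne_zero (mul_ne_zero hL0 (pow_ne_zero 2 hl1)) hL1)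
        have hd0 : (l:ℝ)*l1 - l2 ≠ 0 := sub_ne_zero.mpr (Ne.symm hne)
        have hkval : k = ((l:ℝ)*l1^2 - l2^2)/((l:ℝ)*l1 - l2) := by
          rw [eq_div_iff hd0]; linear_combination e4
        have hα : α = ((3 * (l : ℝ) ^ 2 + (l : ℝ)) * l1 ^ 2 * l2 ^ 2
              - ((l : ℝ) ^ 2 + (l : ℝ)) * l1 * l2 ^ 3
              - 2 * (l : ℝ) ^ 2 * l1 ^ 3 * l2) / ((l : ℝ) * l1 - l2) ^ 2 := by
          rw [eq_div_iff (pow_ne_zero 2 hd0)]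
          have e5 : α = (l:ℝ)*(l1^2 - l1*l2 - k^2 + l2*k) := by
            have h6 := e1
            rw [hA] at h6
            field_simp at h6
            linear_combination h6
          rw [e5]
          linear_combination ((l:ℝ)*l2*((l:ℝ)*l1 - l2)
            - (l:ℝ)*(((l:ℝ)*l1-l2)*k + ((l:ℝ)*l1^2 - l2^2))) * e4
        exact Or.inr (Or.inr (Or.inl ⟨hne, hα, hαF,
          ⟨f 0, fun t => by rw [hfexp t, hkval]⟩⟩))
  · have key : ∀ (c kk d : ℝ), (∀ t, f t = c * Real.exp (kk*t) + d) →
        (∀ t, deriv f t = c*kk*Real.exp (kk*t)) ∧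
        (∀ t, deriv (deriv f) t = c*kk*kk*Real.exp (kk*t)) := by
      intro c kk d hfe
      have hfeq : f = fun t => c * Real.exp (kk*t) + d := funext hfe
      have he1 : deriv f = fun t => c*kk*Real.exp (kk*t) := by
        rw [hfeq, GRW_deriv_cexp_add]
      refine ⟨fun t => by rw [he1], fun t => ?_⟩
      rw [he1, GRW_deriv_cexp]
    rintro (⟨c, hα, hαF, hfc⟩ | ⟨h12, hα0, c1, c2, hαF, hfe⟩ |
      ⟨hne, hα, hαF, c0, hfe⟩ | ⟨hR, hα, hαF, c1, hfe⟩)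
    · -- case (1)
      obtain ⟨hd1, hd2⟩ := key 0 0 c (fun t => by rw [hfc t]; simp)
      subst hα hαF
      constructor
      · intro t
        rw [hd2 t, hd1 t, hfc t]
        field_simp
        ring
      · intro t
        rw [hd1 t, hfc t]
        field_simp
        ring
    · -- case (2)
      subst h12 hα0 hαF
      obtain ⟨hd1, hd2⟩ := key c1 l1 c2 hfe
      constructor
      · intro t
        rw [hd2 t, hd1 t, hfe t]
        field_simp
        ring
      · intro t
        rw [hd1 t, hfe t]
        field_simp
        ring
    · -- case (3)
      have hd0 : (l:ℝ)*l1 - l2 ≠ 0 := sub_ne_zero.mpr (Ne.symm hne)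
      subst hα hαF
      obtain ⟨hd1, hd2⟩ := key c0 (((l:ℝ)*l1^2 - l2^2)/((l:ℝ)*l1 - l2)) 0
        (fun t => by rw [hfe t]; ring)
      constructor
      · intro t
        rw [hd2 t, hd1 t, hfe t]
        field_simp
        ring
      · intro t
        rw [hd1 t, hfe t]
        field_simp
        ring
    · -- case (4)
      subst hα hαF
      obtain ⟨hd1, hd2⟩ := key c1 (l2/2) 0 (fun t => by rw [hfe t]; ring)
      constructor
      · intro t
        rw [hd2 t, hd1 t, hfe t]
        field_simp
        ring
      · intro t
        rw [hd1 t, hfe t]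
        field_simp
        linear_combination (2*c1^2*Real.exp (l2*t/2)^2) * hR
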